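/- If a string x of length k is properly spaced in y and y' is any descendant of y under palindromic duplications of length k (k ≥ 2), then x is properly spaced in y'. -/

import Mathlib

/-- One palindromic duplication of length `k`: a `k`-factor `v` of `x`
gets a reversed copy inserted right after it. -/
def PalStep {q : ℕ} (k : ℕ) (x y : List (ZMod q)) : Prop :=
  ∃ u v w : List (ZMod q), v.length = k ∧ x = u ++ v ++ w ∧
    y = u ++ v ++ v.reverse ++ w

/-- Finitely many (possibly zero) palindromic duplications of length `k`. -/
def PalDerives {q : ℕ} (k : ℕ) : List (ZMod q) → List (ZMod q) → Prop :=
  Relation.ReflTransGen (PalStep k)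

/-- Interleave gap strings with the letters of `x`:
`interleave [g0,…,gk] [x0,…,x_{k-1}] = g0 ++ x0 :: g1 ++ x1 :: ⋯ x_{k-1} :: gk`. -/
def interleave {α : Type*} : List (List α) → List α → List α
  | [], _ => []
  | g :: _, [] => g
  | g :: gs, a :: as => g ++ a :: interleave gs as

/-- `x ∈ Z_q^k` is properly spaced in `y`: `x` is a subsequence of `y` via a gap
decomposition `y = y⁽⁰⁾x₀y⁽¹⁾⋯x_{k-1}y⁽ᵏ⁾`, and when `k` is even all of
`|y⁽¹⁾|,…,|y⁽ᵏ⁾|` are even. -/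
def ProperlySpaced {α : Type*} (k : ℕ) (x y : List α) : Prop :=
  x.length = k ∧ ∃ gaps : List (List α), gaps.length = k + 1 ∧
    y = interleave gaps x ∧ (k % 2 = 0 → ∀ g ∈ gaps.tail, g.length % 2 = 0)

lemma interleave_insert {α : Type*} (B : List α) :
  ∀ (x : List α) (gaps : List (List α)) (A C : List α),
    gaps.length = x.length + 1 →
    interleave gaps x = A ++ C →
    ∃ gaps', gaps'.length = gaps.length ∧
      interleave gaps' x = A ++ B ++ C ∧
      List.Forall₂ (fun g g' => g'.length = g.length ∨ g'.length = g.length + B.length)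
        gaps gaps' := by
  intro x
  induction x with
  | nil =>
      rintro (_ | ⟨g, (_ | _)⟩) A C hlen h
      · simp at hlen
      · refine ⟨[A ++ B ++ C], rfl, by simp [interleave], ?_⟩
        refine List.Forall₂.cons ?_ List.Forall₂.nil
        right
        simp only [interleave] at h
        subst h
        simp [List.length_append]
        omega
      · simp at hlen
  | cons a as ih =>
      rintro (_ | ⟨g, gs⟩) A C hlen h
      · simp at hlen
      · simp only [List.length_cons, Nat.succ_inj] at hlen
        simp only [interleave] at h
        rcases List.append_eq_append_iff.mp h with ⟨t, hA, hC⟩ | ⟨t, hg, hC⟩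
        · -- A = g ++ t, a :: interleave gs as = t ++ C
          rcases t with _ | ⟨b, t⟩
          · -- t = []: A = g, C = a :: interleave gs as
            refine ⟨(g ++ B) :: gs, by simp, ?_, ?_⟩
            · simp only [interleave, hA, List.append_nil]
              rw [← hC.symm]
              simp
            · exact List.Forall₂.cons (Or.inr (by simp))
                (List.forall₂_same.mpr (fun g _ => Or.inl rfl))
          · obtain ⟨rfl, hI⟩ : a = b ∧ interleave gs as = t ++ C := by
              simpa using hC
            obtain ⟨gs', hlen', hint', hfa'⟩ := ih gs t C hlen hI
            refine ⟨g :: gs', by simp [hlen'], ?_, List.Forall₂.cons (Or.inl rfl) hfa'⟩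
            simp [interleave, hint', hA]
        · -- g = A ++ t, C = t ++ a :: interleave gs as
          refine ⟨(A ++ B ++ t) :: gs, by simp, ?_, ?_⟩
          · simp [interleave, hC]
          · refine List.Forall₂.cons (Or.inr ?_) (List.forall₂_same.mpr (fun g _ => Or.inl rfl))
            simp [hg, List.length_append]; omega

lemma forall₂_parity {α : Type*} {n : ℕ} :
    ∀ {t t' : List (List α)},
      List.Forall₂ (fun g g' => g'.length = g.length ∨ g'.length = g.length + n) t t' →
      n % 2 = 0 → (∀ g ∈ t, g.length % 2 = 0) → ∀ g' ∈ t', g'.length % 2 = 0 := by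
  intro t t' hf
  induction hf with
  | nil => intro _ _ g' hg'; simp at hg'
  | cons hr _ ih =>
      intro hn hpar g' hg'
      rcases List.mem_cons.mp hg' with rfl | hg'
      · rcases hr with h | h <;>
          · rw [h]; have := hpar _ List.mem_cons_self; omega
      · exact ih hn (fun g hg => hpar g (List.mem_cons_of_mem _ hg)) g' hg'

lemma step_preserve {q : ℕ} (k : ℕ) (x y y' : List (ZMod q))
    (hps : ProperlySpaced k x y) (h : PalStep k y y') : ProperlySpaced k x y' := by
  obtain ⟨hx, gaps, hglen, hy, hpar⟩ := hps
  obtain ⟨u, v, w, hv, hyd, hy'⟩ := h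
  have hsplit : interleave gaps x = (u ++ v) ++ w := by
    rw [← hy, hyd]
  obtain ⟨gaps', hlen', hint', hfa'⟩ :=
    interleave_insert v.reverse x gaps (u ++ v) w (by rw [hglen, hx]) hsplit
  refine ⟨hx, gaps', by rw [hlen', hglen], ?_, ?_⟩
  · rw [hint', hy']
  · intro hke
    have htail : List.Forall₂
        (fun g g' => g'.length = g.length ∨ g'.length = g.length + v.reverse.length)
        gaps.tail gaps'.tail := by
      cases hfa' with
      | nil => exact List.Forall₂.nil
      | cons _ h => exact h
    exact forall₂_parity htail (by simpa [hv] using hke) (hpar hke)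

/-- Proper spacing persists under length-`k` palindromic duplications. -/
theorem stmt19 {q : ℕ} (k : ℕ) (hk : 2 ≤ k) (x y y' : List (ZMod q))
    (hps : ProperlySpaced k x y) (h : PalDerives k y y') :
    ProperlySpaced k x y' := by
  induction h with
  | refl => exact hps
  | tail _ hstep ih => exact step_preserve k x _ _ ih hstep
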